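/- Let s̄ ∈ ℝ^p, t > 0, γ > 0, and let M(𝕄) be a structured sparsity model for a finite nonempty collection 𝕄 of subsets of {1,…,p}. Then w* = P(−(√t/γ)s̄, S*) is a minimizer of w ↦ ⟨s̄, w⟩ + (γ/(2√t))‖w‖² over M(𝕄), where S* ∈ argmax_{S∈𝕄} ‖P(−(√t/γ)s̄, S)‖². -/

import Mathlib

open scoped RealInnerProductSpace

noncomputable def restrict {p : ℕ} (x : EuclideanSpace ℝ (Fin p)) (S : Finset (Fin p)) :
    EuclideanSpace ℝ (Fin p) :=
  WithLp.toLp 2 (fun i => if i ∈ S then x i else 0)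

lemma key_expand {p : ℕ} (sbar x : EuclideanSpace ℝ (Fin p)) (k : ℝ) :
    ⟪sbar, x⟫ + k * ‖x‖ ^ 2 = ∑ i, (sbar i * x i + k * (x i) ^ 2) := by
  rw [← real_inner_self_eq_norm_sq]
  simp [PiLp.inner_apply, RCLike.inner_apply, Finset.sum_add_distrib, Finset.mul_sum, sq, -real_inner_self_eq_norm_mul_norm, mul_comm]
  rw [← Finset.mul_sum, EuclideanSpace.norm_eq, Real.mul_self_sqrt (by positivity)]
  simp [sq]

theorem stmt_11 {p : ℕ} (sbar : EuclideanSpace ℝ (Fin p)) (t γ : ℝ) (ht : 0 < t) (hγ : 0 < γ)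
    (𝕄 : Finset (Finset (Fin p))) (h𝕄 : 𝕄.Nonempty)
    (Sstar : Finset (Fin p)) (hSstar : Sstar ∈ 𝕄)
    (hmax : ∀ S ∈ 𝕄,
      ‖restrict (-(Real.sqrt t / γ) • sbar) S‖ ^ 2 ≤
        ‖restrict (-(Real.sqrt t / γ) • sbar) Sstar‖ ^ 2) :
    (∃ S ∈ 𝕄, ∀ i, (restrict (-(Real.sqrt t / γ) • sbar) Sstar) i ≠ 0 → i ∈ S) ∧
    ∀ w : EuclideanSpace ℝ (Fin p), (∃ S ∈ 𝕄, ∀ i, w i ≠ 0 → i ∈ S) →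
      ⟪sbar, restrict (-(Real.sqrt t / γ) • sbar) Sstar⟫ +
          (γ / (2 * Real.sqrt t)) * ‖restrict (-(Real.sqrt t / γ) • sbar) Sstar‖ ^ 2 ≤
        ⟪sbar, w⟫ + (γ / (2 * Real.sqrt t)) * ‖w‖ ^ 2 := by
  have hst : 0 < Real.sqrt t := Real.sqrt_pos.2 ht
  set k : ℝ := γ / (2 * Real.sqrt t) with hk
  have hkpos : 0 < k := div_pos hγ (by positivity)
  set c : ℝ := Real.sqrt t / γ with hc
  have hcpos : 0 < c := div_pos hst hγ
  have hck : c * (2 * k) = 1 := by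
    rw [hk, hc]
    field_simp
  set v : EuclideanSpace ℝ (Fin p) := -(Real.sqrt t / γ) • sbar with hv
  have hvi : ∀ i, v i = -c * sbar i := fun i => rfl
  -- value of objective at restrict v S
  have hval : ∀ S : Finset (Fin p),
      ⟪sbar, restrict v S⟫ + k * ‖restrict v S‖ ^ 2 = -k * ‖restrict v S‖ ^ 2 := by
    intro S
    rw [key_expand, ← real_inner_self_eq_norm_sq]
    simp only [PiLp.inner_apply, RCLike.inner_apply, conj_trivial, Finset.mul_sum]
    apply Finset.sum_congr rfl
    intro i _
    by_cases hi : i ∈ S <;> simp [restrict, hi, hvi i] <;> nlinarith [hck]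
  constructor
  · exact ⟨Sstar, hSstar, fun i hne => by
      by_contra h
      exact hne (by simp [restrict, h])⟩
  · intro w ⟨S, hS, hsupp⟩
    have h1 : -k * ‖restrict v S‖ ^ 2 ≤ ⟪sbar, w⟫ + k * ‖w‖ ^ 2 := by
      rw [key_expand, ← hval S, key_expand]
      apply Finset.sum_le_sum
      intro i _
      by_cases hi : i ∈ S
      · have : sbar i * v i + k * (v i) ^ 2 ≤ sbar i * w i + k * (w i) ^ 2 := by
          rw [hvi i]
          nlinarith [sq_nonneg (w i - (-c * sbar i)), hck, hkpos]
        simpa [restrict, hi] using this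
      · have hw : w i = 0 := by
          by_contra h; exact hi (hsupp i h)
        simp [restrict, hi, hw]
    calc ⟪sbar, restrict v Sstar⟫ + k * ‖restrict v Sstar‖ ^ 2
        = -k * ‖restrict v Sstar‖ ^ 2 := hval Sstar
      _ ≤ -k * ‖restrict v S‖ ^ 2 := by nlinarith [hmax S hS]
      _ ≤ ⟪sbar, w⟫ + k * ‖w‖ ^ 2 := h1
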